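/- Let C be a convex market model with ℝ^d_- ⊆ C_t a.s. Then C has the no-arbitrage property A_T(C) ∩ L^0_+ = {0} if and only if A(C) ∩ 𝒜_+ = {0}, where 𝒜_+ denotes the adapted processes with values in ℝ^d_+ a.s. -/

import Mathlib

open MeasureTheory Finset

/-- The no-arbitrage property `A_T(C) ∩ L⁰₊ = {0}` holds iff `A(C) ∩ 𝒜₊ = {0}`. -/
theorem no_arbitrage_iff {Ω : Type*} [m0 : MeasurableSpace Ω]
    (P : Measure Ω) [IsProbabilityMeasure P] (d T : ℕ)
    (F : ℕ → MeasurableSpace Ω) (hF : ∀ t, F t ≤ m0) (hmono : ∀ s t, s ≤ t → F s ≤ F t)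
    (C : ℕ → Ω → Set (Fin d → ℝ))
    (hCneg : ∀ t, ∀ ω, {v : Fin d → ℝ | ∀ i, v i ≤ 0} ⊆ C t ω)
    (hCclosed : ∀ t ω, IsClosed (C t ω)) (hCconv : ∀ t ω, Convex ℝ (C t ω)) :
    -- A_T(C) ∩ L⁰₊ = {0}
    ((∀ g : Ω → Fin d → ℝ,
        (∃ w : ℕ → Ω → Fin d → ℝ, (∀ t, Measurable[F t] (w t)) ∧
          (∀ t ≤ T, ∀ᵐ ω ∂P, w t ω ∈ C t ω) ∧
          (∀ᵐ ω ∂P, g ω = ∑ t ∈ range (T + 1), w t ω)) →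
        (∀ᵐ ω ∂P, ∀ i, 0 ≤ g ω i) →
        (∀ᵐ ω ∂P, g ω = 0)) ↔
    -- A(C) ∩ 𝒜₊ = {0}
      (∀ c : ℕ → Ω → Fin d → ℝ, (∀ t, Measurable[F t] (c t)) →
        (∃ x : ℕ → Ω → Fin d → ℝ, (∀ t, Measurable[F t] (x t)) ∧
          (∀ᵐ ω ∂P, x T ω = 0) ∧
          (∀ t ≤ T, ∀ᵐ ω ∂P,
            x t ω - (if t = 0 then 0 else x (t - 1) ω) + c t ω ∈ C t ω)) →
        (∀ t ≤ T, ∀ᵐ ω ∂P, ∀ i, 0 ≤ c t ω i) →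
        (∀ t ≤ T, ∀ᵐ ω ∂P, c t ω = 0))) := by
  constructor
  · -- NA ⇒ A(C) ∩ 𝒜₊ = {0}
    intro hNA c hc hx hcpos
    obtain ⟨x, hxm, hxT, hxC⟩ := hx
    -- all nonnegativity conditions simultaneously
    have hall : ∀ᵐ ω ∂P, ∀ t, t ≤ T → ∀ i, 0 ≤ c t ω i := by
      rw [ae_all_iff]
      intro t
      by_cases h : t ≤ T
      · filter_upwards [hcpos t h] with ω hω
        exact fun _ => hω
      · filter_upwards with ω h' ; exact absurd h' h
    set g : Ω → Fin d → ℝ := fun ω => ∑ t ∈ range (T + 1), c t ω with hg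
    have hg0 : ∀ᵐ ω ∂P, g ω = 0 := by
      apply hNA
      · refine ⟨fun t ω => x t ω - (if t = 0 then 0 else x (t - 1) ω) + c t ω, ?_, ?_, ?_⟩
        · intro t
          by_cases h0 : t = 0
          · subst h0
            simp only [↓reduceIte, sub_zero]
            exact (hxm 0).add (hc 0)
          · have hx1 : Measurable[F t] (x (t - 1)) :=
              (hxm (t - 1)).mono (hmono _ _ (Nat.sub_le t 1)) le_rfl
            simp only [if_neg h0]
            exact ((hxm t).sub hx1).add (hc t)
        · intro t ht
          exact hxC t ht
        · filter_upwards [hxT] with ω hT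
          have key : ∑ t ∈ range (T + 1),
              (x t ω - (if t = 0 then 0 else x (t - 1) ω)) = x T ω := by
            have h := Finset.sum_range_sub
              (fun t => if t = 0 then (0 : Fin d → ℝ) else x (t - 1) ω) (T + 1)
            simpa using h
          rw [Finset.sum_add_distrib, key, hT, zero_add]
      · filter_upwards [hall] with ω hω i
        have : g ω i = ∑ t ∈ range (T + 1), c t ω i := by
          simp [hg, Finset.sum_apply]
        rw [this]
        exact Finset.sum_nonneg fun t ht => hω t (Nat.lt_succ_iff.mp (mem_range.mp ht)) i
    intro t ht
    filter_upwards [hg0, hall] with ω h0 hpos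
    funext i
    have hsum : ∑ s ∈ range (T + 1), c s ω i = 0 := by
      have := congrFun h0 i
      simpa [hg, Finset.sum_apply] using this
    have := (Finset.sum_eq_zero_iff_of_nonneg
      (fun s hs => hpos s (Nat.lt_succ_iff.mp (mem_range.mp hs)) i)).mp hsum
    exact this t (mem_range.mpr (Nat.lt_succ_of_le ht))
  · -- A(C) ∩ 𝒜₊ = {0} ⇒ NA
    intro hA g hw hgpos
    obtain ⟨w, hwm, hwC, hgsum⟩ := hw
    set c : ℕ → Ω → Fin d → ℝ :=
      fun t ω => if t = T then ∑ s ∈ range (T + 1), w s ω else 0 with hcdef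
    have hcm : ∀ t, Measurable[F t] (c t) := by
      intro t
      by_cases h : t = T
      · subst h
        simp only [hcdef, if_pos rfl]
        exact Finset.measurable_sum _ fun s hs =>
          (hwm s).mono (hmono _ _ (Nat.lt_succ_iff.mp (mem_range.mp hs))) le_rfl
      · simp only [hcdef, if_neg h]
        exact measurable_const
    set x : ℕ → Ω → Fin d → ℝ :=
      fun t ω => if t < T then ∑ s ∈ range (t + 1), w s ω else 0 with hxdef
    have hxm : ∀ t, Measurable[F t] (x t) := by
      intro t
      by_cases h : t < T
      · simp only [hxdef, if_pos h]
        exact Finset.measurable_sum _ fun s hs =>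
          (hwm s).mono (hmono _ _ (Nat.lt_succ_iff.mp (mem_range.mp hs))) le_rfl
      · simp only [hxdef, if_neg h]
        exact measurable_const
    have key := hA c hcm ?_ ?_
    · -- conclude g = 0 a.e.
      have hT := key T le_rfl
      filter_upwards [hT, hgsum] with ω h0 hsum
      have : c T ω = ∑ s ∈ range (T + 1), w s ω := by simp [hcdef]
      rw [hsum, ← this, h0]
    · -- the hedging strategy
      refine ⟨x, hxm, ?_, ?_⟩
      · filter_upwards with ω
        simp [hxdef]
      · intro t ht
        filter_upwards [hwC t ht] with ω hω
        have hexpr : x t ω - (if t = 0 then 0 else x (t - 1) ω) + c t ω = w t ω := by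
          rcases eq_or_lt_of_le ht with hteq | htlt
          · subst hteq
            rcases Nat.eq_zero_or_pos t with h0 | h0
            · subst h0
              simp [hxdef, hcdef]
            · have h1 : ¬ t < t := lt_irrefl t
              have h2 : t - 1 < t := Nat.sub_lt h0 one_pos
              have h3 : t - 1 + 1 = t := Nat.succ_pred_eq_of_pos h0
              simp only [hxdef, hcdef, if_neg h1, if_pos rfl,
                if_neg (Nat.pos_iff_ne_zero.mp h0), if_pos h2, h3]
              rw [Finset.sum_range_succ]
              abel
          · -- t < T
            have hne : t ≠ T := ne_of_lt htlt
            rcases Nat.eq_zero_or_pos t with h0 | h0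
            · subst h0
              simp [hxdef, hcdef, htlt, hne]
            · have h2 : t - 1 < T := lt_of_le_of_lt (Nat.sub_le t 1) htlt
              have h3 : t - 1 + 1 = t := Nat.succ_pred_eq_of_pos h0
              simp only [hxdef, hcdef, if_pos htlt, if_neg hne,
                if_neg (Nat.pos_iff_ne_zero.mp h0), if_pos h2, h3, add_zero]
              rw [Finset.sum_range_succ]
              abel
        rw [hexpr]
        exact hω
    · -- nonnegativity of c
      intro t ht
      by_cases h : t = T
      · subst h
        filter_upwards [hgpos, hgsum] with ω hω hsum i
        have : c t ω = g ω := by simp [hcdef, hsum]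
        rw [this]
        exact hω i
      · filter_upwards with ω i
        simp [hcdef, h]
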